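/- Let S be a w-orthogonal collection in a triangulated category D such that the extension closure ⟨S⟩ is functorially finite in D. Then for each 0 ≤ k ≤ w, the subcategory ⟨S⟩ * Σ^{-1}⟨S⟩ * ⋯ * Σ^{-k}⟨S⟩ is functorially finite in D. -/

import Mathlib

open CategoryTheory CategoryTheory.Limits CategoryTheory.Pretriangulated

universe v u u₂

namespace SMSPaper

/-- Serre duality data on a `k`-linear category, encoded by trace maps. -/
structure SerreData (k : Type u₂) [Field k] (D : Type u) [Category.{v} D] [Preadditive D]
    [Linear k D] where
  F : D ⥤ D
  isEquiv : F.IsEquivalence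
  tr : (x : D) → (x ⟶ F.obj x) →ₗ[k] k
  comm : ∀ {x y : D} (f : x ⟶ y) (g : y ⟶ F.obj x), tr x (f ≫ g) = tr y (g ≫ F.map f)
  nondeg₁ : ∀ {x y : D} (f : x ⟶ y), (∀ g : y ⟶ F.obj x, tr x (f ≫ g) = 0) → f = 0
  nondeg₂ : ∀ {x y : D} (g : y ⟶ F.obj x), (∀ f : x ⟶ y, tr x (f ≫ g) = 0) → g = 0

variable {C : Type u} [Category.{v} C] [Preadditive C] [HasZeroObject C]
  [HasShift C ℤ] [∀ n : ℤ, (shiftFunctor C n).Additive] [Pretriangulated C]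

/-- `f : x ⟶ d` is a right `X`-approximation of `d`. -/
def IsRightApprox (X : Set C) {x d : C} (f : x ⟶ d) : Prop :=
  x ∈ X ∧ ∀ s ∈ X, ∀ g : s ⟶ d, ∃ h : s ⟶ x, h ≫ f = g

/-- `f : d ⟶ x` is a left `X`-approximation of `d`. -/
def IsLeftApprox (X : Set C) {d x : C} (f : d ⟶ x) : Prop :=
  x ∈ X ∧ ∀ s ∈ X, ∀ g : d ⟶ s, ∃ h : x ⟶ s, f ≫ h = g

def RightMinimal {x d : C} (f : x ⟶ d) : Prop :=
  ∀ g : x ⟶ x, g ≫ f = f → IsIso g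

def LeftMinimal {d x : C} (f : d ⟶ x) : Prop :=
  ∀ g : x ⟶ x, f ≫ g = f → IsIso g

def IsMinimalRightApprox (X : Set C) {x d : C} (f : x ⟶ d) : Prop :=
  IsRightApprox X f ∧ RightMinimal f

def IsMinimalLeftApprox (X : Set C) {d x : C} (f : d ⟶ x) : Prop :=
  IsLeftApprox X f ∧ LeftMinimal f

def ContravariantlyFinite (X : Set C) : Prop :=
  ∀ d : C, ∃ (x : C) (f : x ⟶ d), IsRightApprox X f

def CovariantlyFinite (X : Set C) : Prop :=
  ∀ d : C, ∃ (x : C) (f : d ⟶ x), IsLeftApprox X f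

def FunctoriallyFinite (X : Set C) : Prop :=
  ContravariantlyFinite X ∧ CovariantlyFinite X

/-- `X * Y`: objects arising as extensions of an object of `Y` by an object of `X`. -/
def extStar (X Y : Set C) : Set C :=
  {d | ∃ (x y : C) (f : x ⟶ d) (g : d ⟶ y) (h : y ⟶ x⟦(1 : ℤ)⟧),
    (Triangle.mk f g h ∈ distTriang C) ∧ x ∈ X ∧ y ∈ Y}

def ExtClosed (X : Set C) : Prop := extStar X X ⊆ X

/-- extension closure: smallest extension-closed subcategory containing `X`. -/
def extClosure (X : Set C) : Set C := ⋂₀ {T : Set C | X ⊆ T ∧ ExtClosed T}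

/-- closure under direct summands. -/
def sumClosure (X : Set C) : Set C :=
  {d | ∃ x ∈ X, ∃ (i : d ⟶ x) (r : x ⟶ d), i ≫ r = 𝟙 d}

/-- `Sn S n` is `(S)_{n+1}` of the paper: `(S)_1 = S`, `(S)_{n+1} = (S * (S)_n)^⊕`. -/
def Sn (S : Set C) : ℕ → Set C
  | 0 => S
  | n + 1 => sumClosure (extStar S (Sn S n))

def shiftSet (i : ℤ) (S : Set C) : Set C :=
  {d | ∃ s ∈ S, Nonempty (d ≅ s⟦i⟧)}

/-- `S ∪ Σ⁻¹S ∪ ⋯ ∪ Σ^{1-w}S`. -/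
def shiftUnion (w : ℕ) (S : Set C) : Set C :=
  {d | ∃ i : ℕ, i < w ∧ d ∈ shiftSet (-(i : ℤ)) S}

/-- `starChain S n = ⟨S⟩ * Σ⁻¹⟨S⟩ * ⋯ * Σ^{-n}⟨S⟩`. -/
def starChain (S : Set C) : ℕ → Set C
  | 0 => extClosure S
  | n + 1 => extStar (starChain S n) (shiftSet (-((n : ℤ) + 1)) (extClosure S))

def rightPerp (S : Set C) : Set C := {d | ∀ s ∈ S, ∀ f : s ⟶ d, f = 0}

def leftPerp (S : Set C) : Set C := {d | ∀ s ∈ S, ∀ f : d ⟶ s, f = 0}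

/-- `S^{⊥_w} = {d : Hom(Σ^i S, d) = 0 for 0 ≤ i ≤ w}`. -/
def perpW (w : ℕ) (S : Set C) : Set C :=
  {d | ∀ i : ℕ, i ≤ w → ∀ s ∈ S, ∀ f : s⟦(i : ℤ)⟧ ⟶ d, f = 0}

/-- `^{⊥_w}S = {d : Hom(d, Σ^{-i} S) = 0 for 0 ≤ i ≤ w}`. -/
def wPerp (w : ℕ) (S : Set C) : Set C :=
  {d | ∀ i : ℕ, i ≤ w → ∀ s ∈ S, ∀ f : d ⟶ s⟦(-(i : ℤ))⟧, f = 0}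

def Indec (x : C) : Prop :=
  ¬ IsZero x ∧ ∀ e : x ⟶ x, e ≫ e = e → e = 0 ∨ e = 𝟙 x

/-- `(X, Y)` is an `S`-mutation pair. -/
def IsMutationPair (S X Y : Set C) : Prop :=
  X = leftPerp S ∩ rightPerp S ∩ leftPerp (shiftSet (-1) S) ∩
      shiftSet (-1) (extStar (extClosure S) Y) ∧
  Y = leftPerp S ∩ rightPerp S ∩ rightPerp (shiftSet 1 S) ∩
      shiftSet 1 (extStar X (extClosure S))

/-- `r` is the right mutation of `d` with respect to `S`. -/
def IsRightMutation (S : Set C) (d r : C) : Prop :=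
  ∃ (s : C) (α : s ⟶ d⟦(1 : ℤ)⟧) (β : d⟦(1 : ℤ)⟧ ⟶ r) (γ : r ⟶ s⟦(1 : ℤ)⟧),
    (Triangle.mk α β γ ∈ distTriang C) ∧ IsMinimalRightApprox (extClosure S) α

/-- `l` is the left mutation of `d` with respect to `S`. -/
def IsLeftMutation (S : Set C) (d l : C) : Prop :=
  ∃ (s : C) (β : l ⟶ d⟦(-1 : ℤ)⟧) (α : d⟦(-1 : ℤ)⟧ ⟶ s) (γ : s ⟶ l⟦(1 : ℤ)⟧),
    (Triangle.mk β α γ ∈ distTriang C) ∧ IsMinimalLeftApprox (extClosure S) α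

/-- the extension closure of `R` computed inside the triangulated category `Z`,
whose triangles `x → z → y → x⟨1⟩` come from a cone `c` of `x → z` in `D` together
with a minimal right `⟨S⟩`-approximation triangle `s → c → y → Σs`. -/
inductive zExtClosure (S Z R : Set C) : C → Prop
  | of (r : C) (hr : r ∈ R) : zExtClosure S Z R r
  | ext (x z y c s : C) (f : x ⟶ z) (g₁ : z ⟶ c) (h₁ : c ⟶ x⟦(1 : ℤ)⟧)
      (α : s ⟶ c) (β : c ⟶ y) (γ : y ⟶ s⟦(1 : ℤ)⟧)
      (hT : Triangle.mk f g₁ h₁ ∈ distTriang C)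
      (hT' : Triangle.mk α β γ ∈ distTriang C)
      (hmin : IsMinimalRightApprox (extClosure S) α)
      (hz : z ∈ Z)
      (hx : zExtClosure S Z R x) (hy : zExtClosure S Z R y) :
      zExtClosure S Z R z

variable (k : Type u₂) [Field k] [Linear k C]

/-- orthogonal collection: `dim Hom(x, y) = δ_{x,y}`. -/
def IsOrthogonalCollection (S : Set C) : Prop :=
  (∀ x ∈ S, Module.finrank k (x ⟶ x) = 1) ∧
  ∀ x ∈ S, ∀ y ∈ S, x ≠ y → ∀ f : x ⟶ y, f = 0

/-- `w`-orthogonal collection. -/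
def IsWOrthogonal (w : ℕ) (S : Set C) : Prop :=
  IsOrthogonalCollection k S ∧
  ∀ i : ℕ, 1 ≤ i → i ≤ w - 1 → ∀ x ∈ S, ∀ y ∈ S, ∀ f : x⟦(i : ℤ)⟧ ⟶ y, f = 0

/-- `w`-simple-minded system. -/
def IsWSMS (w : ℕ) (S : Set C) : Prop :=
  IsWOrthogonal k w S ∧ ∀ d : C, d ∈ sumClosure (extClosure (shiftUnion w S))

def IsRightRiedtmann (w : ℕ) (S : Set C) : Prop :=
  IsWOrthogonal k w S ∧
  ∀ d : C, (∀ i : ℕ, i < w → ∀ s ∈ S, ∀ f : d⟦(i : ℤ)⟧ ⟶ s, f = 0) → IsZero d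

def IsLeftRiedtmann (w : ℕ) (S : Set C) : Prop :=
  IsWOrthogonal k w S ∧
  ∀ d : C, (∀ i : ℕ, i < w → ∀ s ∈ S, ∀ f : s⟦(i : ℤ)⟧ ⟶ d, f = 0) → IsZero d

/-- `S` is an `𝕊_w`-subcategory (`𝕊_w = 𝕊 Σ^{-w}`). -/
def IsSwSubcat (SD : SerreData k C) (w : ℤ) (S : Set C) : Prop :=
  ∀ x : C, x ∈ S ↔ ∃ s ∈ S, Nonempty (x ≅ SD.F.obj (s⟦-w⟧))

/-- the universal map `z → 𝕊z`, corresponding to the trace functional on `End(z)`. -/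
def IsUniversalMap (SD : SerreData k C) (z : C) (h : z ⟶ SD.F.obj z) : Prop :=
  SD.tr z h = 1 ∧ ∀ f : z ⟶ z, ¬ IsIso f → SD.tr z (f ≫ h) = 0

section Aux

variable {k}

/-- exactness of `Hom(-, A)` at the first spot of a distinguished triangle. -/
lemma aux_yoneda_exact₁ {T : Triangle C} (hT : T ∈ distTriang C) {A : C} (f : T.obj₁ ⟶ A)
    (hf : T.mor₃⟦(-1 : ℤ)⟧' ≫ (shiftEquiv C (1 : ℤ)).unitIso.inv.app T.obj₁ ≫ f = 0) :
    ∃ g : T.obj₂ ⟶ A, f = T.mor₁ ≫ g := by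
  obtain ⟨g, hg⟩ := Triangle.yoneda_exact₂ _ (inv_rot_of_distTriang _ hT) f (by
    show (-(T.mor₃⟦(-1 : ℤ)⟧' ≫ (shiftEquiv C (1 : ℤ)).unitIso.inv.app T.obj₁)) ≫ f = 0
    rw [Preadditive.neg_comp, neg_eq_zero]
    exact (Category.assoc _ _ _).trans hf)
  exact ⟨g, hg⟩

lemma aux_mor₃_shift_comp_mor₁ {T : Triangle C} (hT : T ∈ distTriang C) :
    T.mor₃⟦(-1 : ℤ)⟧' ≫ (shiftEquiv C (1 : ℤ)).unitIso.inv.app T.obj₁ ≫ T.mor₁ = 0 := by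
  have h : (-(T.mor₃⟦(-1 : ℤ)⟧' ≫ (shiftEquiv C (1 : ℤ)).unitIso.inv.app T.obj₁)) ≫ T.mor₁ = 0 :=
    comp_distTriang_mor_zero₁₂ _ (inv_rot_of_distTriang _ hT)
  rw [Preadditive.neg_comp, neg_eq_zero] at h
  exact (Category.assoc _ _ _).symm.trans h

/-- `extStar` of contravariantly finite subcategories is contravariantly finite. -/
lemma extStar_contravariantlyFinite {X Y : Set C} (hX : ContravariantlyFinite X)
    (hY : ContravariantlyFinite Y) : ContravariantlyFinite (extStar X Y) := by
  intro d
  obtain ⟨x₀, f, hx₀, hfapp⟩ := hX d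
  obtain ⟨z, p, bd, hT2⟩ := distinguished_cocone_triangle f
  obtain ⟨y₀, g, hy₀, hgapp⟩ := hY z
  obtain ⟨e, i, q, hT1⟩ := distinguished_cocone_triangle₂ (g ≫ bd)
  obtain ⟨m, hm₁, hm₂⟩ := complete_distinguished_triangle_morphism₂
    (Triangle.mk i q (g ≫ bd)) (Triangle.mk f p bd) hT1 hT2 (𝟙 x₀) g ((congrArg (fun t => (g ≫ bd) ≫ t) ((shiftFunctor C (1 : ℤ)).map_id x₀)).trans (Category.comp_id _))
  replace hm₁ := hm₁.trans (Category.id_comp _)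
  obtain ⟨m, hm₁, hm₂⟩ : ∃ m' : e ⟶ d, i ≫ m' = f ∧ q ≫ g = m' ≫ p := ⟨m, hm₁, hm₂⟩
  refine ⟨e, m, ⟨x₀, y₀, i, q, g ≫ bd, hT1, hx₀, hy₀⟩, ?_⟩
  rintro s ⟨x', y', a, b, c, hTs, hx', hy'⟩ φ
  obtain ⟨u, hu⟩ := hfapp x' hx' (a ≫ φ)
  have hfp : f ≫ p = 0 := comp_distTriang_mor_zero₁₂ _ hT2
  have hpb : p ≫ bd = 0 := comp_distTriang_mor_zero₂₃ _ hT2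
  obtain ⟨ψ, hψ⟩ := Triangle.yoneda_exact₂ _ hTs (φ ≫ p) (by
    show a ≫ φ ≫ p = 0
    rw [← reassoc_of% hu, hfp, comp_zero])
  obtain ⟨ψ, hψ⟩ : ∃ ψ' : y' ⟶ z, φ ≫ p = b ≫ ψ' := ⟨ψ, hψ⟩
  obtain ⟨v, hv⟩ := hgapp y' hy' ψ
  obtain ⟨χ₀, hχ₀⟩ := Triangle.coyoneda_exact₃ _ hT1 (b ≫ v) (by
    show (b ≫ v) ≫ g ≫ bd = 0
    rw [Category.assoc, ← Category.assoc v, hv, ← reassoc_of% hψ, hpb, comp_zero])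
  obtain ⟨χ, hχ⟩ : ∃ χ : s ⟶ e, b ≫ v = χ ≫ q := ⟨χ₀, hχ₀⟩
  obtain ⟨r, hr⟩ := Triangle.coyoneda_exact₂ _ hT2 (χ ≫ m - φ) (by
    show (χ ≫ m - φ) ≫ p = 0
    rw [Preadditive.sub_comp, Category.assoc, ← hm₂, ← Category.assoc, ← hχ,
      Category.assoc, hv, hψ, sub_self])
  obtain ⟨r, hr⟩ : ∃ r' : s ⟶ x₀, χ ≫ m - φ = r' ≫ f := ⟨r, hr⟩
  refine ⟨χ - r ≫ i, ?_⟩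
  have : (χ - r ≫ i) ≫ m = χ ≫ m - (r ≫ i) ≫ m := Preadditive.sub_comp _ _ _
  rw [this, Category.assoc, hm₁, ← hr]
  abel

/-- `extStar` of covariantly finite subcategories is covariantly finite. -/
lemma extStar_covariantlyFinite {X Y : Set C} (hX : CovariantlyFinite X)
    (hY : CovariantlyFinite Y) : CovariantlyFinite (extStar X Y) := by
  intro d
  obtain ⟨y₀, g, hy₀, hgapp⟩ := hY d
  obtain ⟨z, p, w, hT2⟩ := distinguished_cocone_triangle₁ g
  obtain ⟨x₀, f, hx₀, hfapp⟩ := hX z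
  obtain ⟨e, i, q, hT1⟩ := distinguished_cocone_triangle₂ (w ≫ f⟦(1 : ℤ)⟧')
  obtain ⟨m, hm₁, hm₂⟩ := complete_distinguished_triangle_morphism₂
    (Triangle.mk p g w) (Triangle.mk i q (w ≫ f⟦(1 : ℤ)⟧')) hT2 hT1 f (𝟙 y₀) (Category.id_comp _).symm
  replace hm₂ := (Category.comp_id _).symm.trans hm₂
  obtain ⟨m, hm₁, hm₂⟩ : ∃ m' : d ⟶ e, p ≫ m' = f ≫ i ∧ g = m' ≫ q := ⟨m, hm₁, hm₂⟩
  refine ⟨e, m, ⟨x₀, y₀, i, q, w ≫ f⟦(1 : ℤ)⟧', hT1, hx₀, hy₀⟩, ?_⟩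
  rintro s ⟨x', y', a, b, c, hTs, hx', hy'⟩ φ
  obtain ⟨v, hv⟩ := hgapp y' hy' (φ ≫ b)
  have hpg : p ≫ g = 0 := comp_distTriang_mor_zero₁₂ _ hT2
  obtain ⟨ψ, hψ⟩ := Triangle.coyoneda_exact₂ _ hTs (p ≫ φ) (by
    show (p ≫ φ) ≫ b = 0
    rw [Category.assoc, ← hv, ← Category.assoc, hpg, zero_comp])
  obtain ⟨ψ, hψ⟩ : ∃ ψ' : z ⟶ x', p ≫ φ = ψ' ≫ a := ⟨ψ, hψ⟩
  obtain ⟨u, hu⟩ := hfapp x' hx' ψ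
  obtain ⟨χ₀, hχ₀⟩ := aux_yoneda_exact₁ hT1 (u ≫ a) (by
    show (w ≫ f⟦(1 : ℤ)⟧')⟦(-1 : ℤ)⟧' ≫
      (shiftEquiv C (1 : ℤ)).unitIso.inv.app x₀ ≫ u ≫ a = 0
    have key : w⟦(-1 : ℤ)⟧' ≫ (shiftEquiv C (1 : ℤ)).unitIso.inv.app z ≫ p = 0 :=
      aux_mor₃_shift_comp_mor₁ hT2
    have nat : (f⟦(1 : ℤ)⟧')⟦(-1 : ℤ)⟧' ≫ (shiftEquiv C (1 : ℤ)).unitIso.inv.app x₀ =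
        (shiftEquiv C (1 : ℤ)).unitIso.inv.app z ≫ f :=
      (shiftEquiv C (1 : ℤ)).unitIso.inv.naturality f
    rw [Functor.map_comp, Category.assoc]
    have e1 : (f⟦(1 : ℤ)⟧')⟦(-1 : ℤ)⟧' ≫ (shiftEquiv C (1 : ℤ)).unitIso.inv.app x₀ ≫ u ≫ a =
        (shiftEquiv C (1 : ℤ)).unitIso.inv.app z ≫ p ≫ φ :=
      (Category.assoc _ _ _).symm.trans ((congrArg (· ≫ u ≫ a) nat).trans
        ((Category.assoc _ _ _).trans (congrArg ((shiftEquiv C (1 : ℤ)).unitIso.inv.app z ≫ ·)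
          (((Category.assoc _ _ _).symm.trans (congrArg (· ≫ a) hu)).trans hψ.symm))))
    exact (congrArg (w⟦(-1 : ℤ)⟧' ≫ ·) (e1.trans (Category.assoc _ _ _).symm)).trans
      (((reassoc_of% key) φ).trans zero_comp))
  obtain ⟨χ, hχ⟩ : ∃ χ : e ⟶ s, u ≫ a = i ≫ χ := ⟨χ₀, hχ₀⟩
  obtain ⟨r, hr⟩ := Triangle.yoneda_exact₂ _ hT2 (m ≫ χ - φ) (by
    show p ≫ (m ≫ χ - φ) = 0
    rw [Preadditive.comp_sub, ← Category.assoc, hm₁, Category.assoc, ← hχ,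
      ← Category.assoc, hu, hψ, sub_self])
  obtain ⟨r, hr⟩ : ∃ r' : y₀ ⟶ s, m ≫ χ - φ = g ≫ r' := ⟨r, hr⟩
  refine ⟨χ - q ≫ r, ?_⟩
  have : m ≫ (χ - q ≫ r) = m ≫ χ - m ≫ q ≫ r := Preadditive.comp_sub _ _ _
  rw [this, ← Category.assoc, ← hm₂, ← hr]
  abel

lemma shiftSet_contravariantlyFinite (i : ℤ) {X : Set C} (h : ContravariantlyFinite X) :
    ContravariantlyFinite (shiftSet i X) := by
  intro d
  obtain ⟨x₀, f, hx₀, happ⟩ := h (d⟦(-i)⟧)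
  let adj := (shiftEquiv C i).toAdjunction
  refine ⟨x₀⟦i⟧, (adj.homEquiv x₀ d).symm f, ⟨x₀, hx₀, ⟨Iso.refl _⟩⟩, ?_⟩
  rintro s' ⟨s, hs, ⟨φ⟩⟩ g
  obtain ⟨h₀, hh₀⟩ := happ s hs (adj.homEquiv s d (φ.inv ≫ g))
  refine ⟨φ.hom ≫ (shiftFunctor C i).map h₀, ?_⟩
  have : (shiftFunctor C i).map h₀ ≫ (adj.homEquiv x₀ d).symm f
      = (adj.homEquiv s d).symm (h₀ ≫ f) :=
    (adj.homEquiv_naturality_left_symm h₀ f).symm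
  erw [Category.assoc, this, hh₀, Equiv.symm_apply_apply, Iso.hom_inv_id_assoc]

lemma shiftSet_covariantlyFinite (i : ℤ) {X : Set C} (h : CovariantlyFinite X) :
    CovariantlyFinite (shiftSet i X) := by
  intro d
  obtain ⟨x₀, f, hx₀, happ⟩ := h (d⟦(-i)⟧)
  let adj := (shiftEquiv C i).symm.toAdjunction
  refine ⟨x₀⟦i⟧, adj.homEquiv d x₀ f, ⟨x₀, hx₀, ⟨Iso.refl _⟩⟩, ?_⟩
  rintro s' ⟨s, hs, ⟨φ⟩⟩ g
  obtain ⟨h₀, hh₀⟩ := happ s hs ((adj.homEquiv d s).symm (g ≫ φ.hom))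
  refine ⟨(shiftFunctor C i).map h₀ ≫ φ.inv, ?_⟩
  have : adj.homEquiv d x₀ f ≫ (shiftFunctor C i).map h₀
      = adj.homEquiv d s (f ≫ h₀) :=
    (adj.homEquiv_naturality_right f h₀).symm
  erw [← Category.assoc, this, hh₀, Equiv.apply_symm_apply, Category.assoc,
    Iso.hom_inv_id, Category.comp_id]

lemma starChain_functoriallyFinite (S : Set C) (hff : FunctoriallyFinite (extClosure S)) :
    ∀ j : ℕ, FunctoriallyFinite (starChain S j)
  | 0 => hff
  | n + 1 =>
    ⟨extStar_contravariantlyFinite (starChain_functoriallyFinite S hff n).1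
        (shiftSet_contravariantlyFinite _ hff.1),
      extStar_covariantlyFinite (starChain_functoriallyFinite S hff n).2
        (shiftSet_covariantlyFinite _ hff.2)⟩

end Aux

/-- If `⟨S⟩` is functorially finite for a `w`-orthogonal collection `S`, then so is
`⟨S⟩ * Σ⁻¹⟨S⟩ * ⋯ * Σ^{-j}⟨S⟩` for each `0 ≤ j ≤ w`. -/
theorem stmt8 (w : ℕ) (S : Set C) (hS : IsWOrthogonal k w S)
    (hff : FunctoriallyFinite (extClosure S)) (j : ℕ) (hj : j ≤ w) :
    FunctoriallyFinite (starChain S j) :=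
  starChain_functoriallyFinite S hff j

end SMSPaper
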